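/- Let P⁰ and P¹ be probability measures (point processes) on configurations over [-R,R], let G : Conf × Conf → [0, R] be measurable with 0 ≤ G ≤ R, and suppose every coupling Q of P⁰ and P¹ satisfies E_Q[G] ≥ g·R for some g > 0. Let A, B be events with P⁰(A) ≥ 1 - g/100 and P¹(B) ≥ 1 - g/100, and let Q̃ be any coupling of P⁰(·|A) and P¹(·|B). Then E_{Q̃}[G] ≥ (g/2)·R. -/

import Mathlib

open MeasureTheory ProbabilityTheory

theorem coupling_gain_transfer
    {Ω : Type*} [MeasurableSpace Ω]
    (P0 P1 : Measure Ω) [IsProbabilityMeasure P0] [IsProbabilityMeasure P1]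
    (R g : ℝ) (hg : 0 < g)
    (G : Ω × Ω → ℝ) (hGmeas : Measurable G)
    (hG0 : ∀ p, 0 ≤ G p) (hGR : ∀ p, G p ≤ R)
    (hlow : ∀ Q : Measure (Ω × Ω), IsProbabilityMeasure Q →
      Q.map Prod.fst = P0 → Q.map Prod.snd = P1 → g * R ≤ ∫ p, G p ∂Q)
    (A B : Set Ω) (hA : MeasurableSet A) (hB : MeasurableSet B)
    (hPA : 1 - g / 100 ≤ (P0 A).toReal) (hPB : 1 - g / 100 ≤ (P1 B).toReal)
    (Q' : Measure (Ω × Ω)) [IsProbabilityMeasure Q']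
    (hQ'1 : Q'.map Prod.fst = P0[|A]) (hQ'2 : Q'.map Prod.snd = P1[|B]) :
    g / 2 * R ≤ ∫ p, G p ∂Q' := by
  -- Ω is nonempty, so 0 ≤ R
  have hΩ : Nonempty Ω := by
    by_contra h
    rw [not_nonempty_iff] at h
    have := measure_univ (μ := P0)
    rw [Set.univ_eq_empty_iff.2 h, measure_empty] at this
    exact zero_ne_one this
  obtain ⟨ω⟩ := hΩ
  have hR0 : 0 ≤ R := le_trans (hG0 (ω, ω)) (hGR (ω, ω))
  -- integrability of G w.r.t. any finite measure
  have hint : ∀ (μ : Measure (Ω × Ω)) [IsFiniteMeasure μ], Integrable G μ := by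
    intro μ _
    exact (integrable_const R).mono' hGmeas.aestronglyMeasurable
      (Filter.Eventually.of_forall fun p => by
        rw [Real.norm_eq_abs, abs_of_nonneg (hG0 p)]; exact hGR p)
  have hEnn : 0 ≤ ∫ p, G p ∂Q' := integral_nonneg hG0
  rcases eq_or_lt_of_le hR0 with hR | hR
  · -- R = 0
    rw [← hR, mul_zero]
    exact hEnn
  -- g ≤ 1
  have hg1 : g ≤ 1 := by
    have h1 : (P0.prod P1).map Prod.fst = P0 := by
      rw [Measure.map_fst_prod, measure_univ, one_smul]
    have h2 : (P0.prod P1).map Prod.snd = P1 := by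
      rw [Measure.map_snd_prod, measure_univ, one_smul]
    have h3 := hlow (P0.prod P1) inferInstance h1 h2
    have h4 : ∫ p, G p ∂(P0.prod P1) ≤ ∫ _, R ∂(P0.prod P1) :=
      integral_mono (hint _) (integrable_const R) hGR
    rw [integral_const, measureReal_def, measure_univ, ENNReal.toReal_one, one_smul] at h4
    nlinarith
  -- positivity of conditioning masses
  set a := P0 A with ha_def
  set b := P1 B with hb_def
  have ha1 : a ≤ 1 := prob_le_one
  have hb1 : b ≤ 1 := prob_le_one
  have ha_top : a ≠ ⊤ := ne_top_of_le_ne_top ENNReal.one_ne_top ha1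
  have hb_top : b ≠ ⊤ := ne_top_of_le_ne_top ENNReal.one_ne_top hb1
  have ha0 : a ≠ 0 := by
    intro h0
    have h1 : (P0[|A]) Set.univ = 1 := by
      rw [← hQ'1, Measure.map_apply measurable_fst MeasurableSet.univ]
      simp
    rw [cond_apply hA, Set.inter_univ, ← ha_def, h0] at h1
    simp at h1
  have hb0 : b ≠ 0 := by
    intro h0
    have h1 : (P1[|B]) Set.univ = 1 := by
      rw [← hQ'2, Measure.map_apply measurable_snd MeasurableSet.univ]
      simp
    rw [cond_apply hB, Set.inter_univ, ← hb_def, h0] at h1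
    simp at h1
  -- the glued coupling
  set S : Set (Ω × Ω) := (A ×ˢ B)ᶜ with hS_def
  set Q : Measure (Ω × Ω) := (a * b) • Q' + (P0.prod P1).restrict S with hQ_def
  have hScompl : S = (Aᶜ ×ˢ (Set.univ : Set Ω)) ∪ (A ×ˢ Bᶜ) := by
    ext ⟨x, y⟩
    simp only [hS_def, Set.mem_compl_iff, Set.mem_prod, Set.mem_union, Set.mem_univ, and_true]
    tauto
  have hdisj : Disjoint (Aᶜ ×ˢ (Set.univ : Set Ω)) (A ×ˢ Bᶜ) := by
    rw [Set.disjoint_left]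
    rintro ⟨x, y⟩ ⟨hx, -⟩ ⟨hx', -⟩
    exact hx hx'
  have hrest : (P0.prod P1).restrict S =
      (P0.restrict Aᶜ).prod P1 + (P0.restrict A).prod (P1.restrict Bᶜ) := by
    rw [hScompl, Measure.restrict_union hdisj (hA.prod hB.compl),
      ← Measure.prod_restrict, ← Measure.prod_restrict, Measure.restrict_univ]
  -- first marginal
  have hcond1 : P0[|A] = a⁻¹ • P0.restrict A := rfl
  have hcond2 : P1[|B] = b⁻¹ • P1.restrict B := rfl
  have hmap1 : Q.map Prod.fst = P0 := by
    rw [hQ_def, Measure.map_add _ _ measurable_fst, Measure.map_smul, hQ'1, hrest,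
      Measure.map_add _ _ measurable_fst, Measure.map_fst_prod, Measure.map_fst_prod,
      measure_univ, one_smul, hcond1, smul_smul]
    have h1 : a * b * a⁻¹ = b := by
      rw [mul_comm a b, mul_assoc, ENNReal.mul_inv_cancel ha0 ha_top, mul_one]
    have h2 : (P1.restrict Bᶜ) Set.univ = 1 - b := by
      rw [Measure.restrict_apply MeasurableSet.univ, Set.univ_inter,
        measure_compl hB hb_top, measure_univ]
    rw [h1, h2, ← add_assoc]
    have h3 : b • P0.restrict A + P0.restrict Aᶜ + (1 - b) • P0.restrict A
        = P0.restrict A + P0.restrict Aᶜ := by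
      rw [add_right_comm, ← add_smul, add_tsub_cancel_of_le hb1, one_smul]
    rw [h3, Measure.restrict_add_restrict_compl hA]
  have hmap2 : Q.map Prod.snd = P1 := by
    rw [hQ_def, Measure.map_add _ _ measurable_snd, Measure.map_smul, hQ'2, hrest,
      Measure.map_add _ _ measurable_snd, Measure.map_snd_prod, Measure.map_snd_prod,
      hcond2, smul_smul]
    have h1 : a * b * b⁻¹ = a := by
      rw [mul_assoc, ENNReal.mul_inv_cancel hb0 hb_top, mul_one]
    have h2 : (P0.restrict Aᶜ) Set.univ = 1 - a := by
      rw [Measure.restrict_apply MeasurableSet.univ, Set.univ_inter,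
        measure_compl hA ha_top, measure_univ]
    have h3 : (P0.restrict A) Set.univ = a := by
      rw [Measure.restrict_apply MeasurableSet.univ, Set.univ_inter]
    rw [h1, h2, h3]
    calc a • P1.restrict B + ((1 - a) • P1 + a • P1.restrict Bᶜ)
        = a • (P1.restrict B + P1.restrict Bᶜ) + (1 - a) • P1 := by
          rw [smul_add]; abel
      _ = P1 := by
          rw [Measure.restrict_add_restrict_compl hB, ← add_smul,
            add_tsub_cancel_of_le ha1, one_smul]
  -- measure of S
  have hab1 : a * b ≤ 1 := le_trans (mul_le_mul' ha1 hb1) (by norm_num)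
  have habtop : a * b ≠ ⊤ := ne_top_of_le_ne_top ENNReal.one_ne_top hab1
  have hmS : (P0.prod P1) S = 1 - a * b := by
    rw [hS_def, measure_compl (hA.prod hB) (measure_ne_top _ _), measure_univ,
      Measure.prod_prod]
  -- Q is a probability measure
  have hQprob : IsProbabilityMeasure Q := by
    constructor
    rw [hQ_def, Measure.add_apply, Measure.smul_apply, measure_univ, smul_eq_mul, mul_one,
      Measure.restrict_apply MeasurableSet.univ, Set.univ_inter, hmS,
      add_tsub_cancel_of_le hab1]
  have hQG := hlow Q hQprob hmap1 hmap2
  -- split the integral over Q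
  have hsmulfin : IsFiniteMeasure ((a * b) • Q') := by
    constructor
    rw [Measure.smul_apply, measure_univ, smul_eq_mul, mul_one]
    exact lt_of_le_of_lt hab1 (by norm_num)
  have hsplit : ∫ p, G p ∂Q = (a * b).toReal * ∫ p, G p ∂Q'
      + ∫ p, G p ∂((P0.prod P1).restrict S) := by
    rw [hQ_def, integral_add_measure (@hint _ hsmulfin) (hint _), integral_smul_measure,
      smul_eq_mul]
  -- bound the integral over S
  have hbound : ∫ p, G p ∂((P0.prod P1).restrict S) ≤ R * ((P0.prod P1) S).toReal := by
    have h1 : ∫ p, G p ∂((P0.prod P1).restrict S) ≤ ∫ _, R ∂((P0.prod P1).restrict S) :=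
      integral_mono (hint _) (integrable_const R) hGR
    rw [integral_const, measureReal_def, Measure.restrict_apply MeasurableSet.univ, Set.univ_inter,
      smul_eq_mul, mul_comm] at h1
    exact h1
  -- pass to real arithmetic
  set α := a.toReal with hα_def
  set β := b.toReal with hβ_def
  have hαβ : (a * b).toReal = α * β := ENNReal.toReal_mul
  have hmSr : ((P0.prod P1) S).toReal = 1 - α * β := by
    rw [hmS, ENNReal.toReal_sub_of_le hab1 ENNReal.one_ne_top, ENNReal.toReal_one, hαβ]
  have hα1 : α ≤ 1 := by
    rw [hα_def]
    exact ENNReal.toReal_le_of_le_ofReal zero_le_one (by simpa using ha1)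
  have hβ1 : β ≤ 1 := by
    rw [hβ_def]
    exact ENNReal.toReal_le_of_le_ofReal zero_le_one (by simpa using hb1)
  have hα0 : 0 ≤ α := ENNReal.toReal_nonneg
  have hβ0 : 0 ≤ β := ENNReal.toReal_nonneg
  rw [hsplit, hαβ] at hQG
  rw [hmSr] at hbound
  set E := ∫ p, G p ∂Q' with hE_def
  have hkey : g * R ≤ α * β * E + R * (1 - α * β) := by linarith
  have hab_lb : (1 - g / 100) * (1 - g / 100) ≤ α * β := by
    apply mul_le_mul hPA hPB (by linarith) hα0
  nlinarith [mul_nonneg (mul_nonneg hα0 hβ0) hEnn, mul_nonneg hEnn (sub_nonneg.2 (mul_le_one₀ hα1 hβ0 hβ1)), mul_pos hg hR]
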